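/- Let U be a subset of a finite-dimensional inner product space Θ, let L : U → ℝ≥0 be differentiable, and suppose there exist μ > 0 and a strictly increasing differentiable φ : (0,∞) → ℝ such that for all θ ∈ U with L(θ) ≠ 0, φ'(L(θ)) · ‖∇L(θ)‖² ≥ μ. Then any gradient flow θ : ℝ≥0 → U of L with L(θ₀) ≠ 0 satisfies L(θ_t) ≤ φ⁻¹(φ(L(θ₀)) − μt) for all t ≥ 0 such that φ(L(θ₀)) − μt lies in the range of φ. -/

import Mathlib

/-- Kurdyka–Łojasiewicz convergence: if `φ' (L θ) * ‖∇L θ‖² ≥ μ` on `U` away from zero loss,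
then along any gradient flow staying in `U` with nonzero initial loss,
`L (θ t) ≤ φ⁻¹ (φ (L (θ 0)) - μ t)` whenever the latter value is in the range of `φ`. -/
theorem stmt0 {Θ : Type*} [NormedAddCommGroup Θ] [InnerProductSpace ℝ Θ]
    [FiniteDimensional ℝ Θ]
    (U : Set Θ) (L : Θ → ℝ) (hLnonneg : ∀ θ ∈ U, 0 ≤ L θ)
    (hLdiff : ∀ θ ∈ U, DifferentiableAt ℝ L θ)
    (μ : ℝ) (hμ : 0 < μ)
    (φ : ℝ → ℝ) (hφmono : StrictMonoOn φ (Set.Ioi (0:ℝ)))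
    (hφdiff : ∀ u : ℝ, 0 < u → DifferentiableAt ℝ φ u)
    (hKL : ∀ θ ∈ U, L θ ≠ 0 → μ ≤ deriv φ (L θ) * ‖gradient L θ‖ ^ 2)
    (θ : ℝ → Θ)
    (hflow : ∀ t : ℝ, 0 ≤ t → HasDerivAt θ (-(gradient L (θ t))) t)
    (hmem : ∀ t : ℝ, 0 ≤ t → θ t ∈ U)
    (hinit : L (θ 0) ≠ 0) :
    ∀ t : ℝ, 0 ≤ t → ∀ u : ℝ, 0 < u → φ u = φ (L (θ 0)) - μ * t →
      L (θ t) ≤ u := by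
  -- derivative of L ∘ θ
  have hA : ∀ s : ℝ, 0 ≤ s →
      HasDerivAt (fun r => L (θ r)) (-(‖gradient L (θ s)‖ ^ 2)) s := by
    intro s hs
    have hd := hLdiff (θ s) (hmem s hs)
    have hg : HasGradientAt L (gradient L (θ s)) (θ s) := hd.hasGradientAt
    have := hg.hasFDerivAt.comp_hasDerivAt s (hflow s hs)
    convert this using 1
    · rfl
    · rfl
    · rfl
    simp [InnerProductSpace.toDual_apply_apply, real_inner_smul_right,
      real_inner_self_eq_norm_sq]
    rw [← real_inner_self_eq_norm_sq]
    exact InnerProductSpace.toDual_symm_apply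
  -- L ∘ θ is antitone on [0, ∞)
  have hanti : AntitoneOn (fun r => L (θ r)) (Set.Ici (0:ℝ)) := by
    apply antitoneOn_of_deriv_nonpos (convex_Ici 0)
    · intro x hx
      exact ((hA x hx).continuousAt).continuousWithinAt
    · intro x hx
      rw [interior_Ici] at hx
      exact ((hA x (le_of_lt hx)).differentiableAt).differentiableWithinAt
    · intro x hx
      rw [interior_Ici] at hx
      rw [(hA x (le_of_lt hx)).deriv]
      exact neg_nonpos.mpr (by positivity)
  intro t ht u hu hφu
  rcases eq_or_lt_of_le (hLnonneg (θ t) (hmem t ht)) with h0 | hpos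
  · linarith [h0.symm, hu]
  -- now L (θ t) > 0, hence L (θ s) > 0 for s ∈ [0, t]
  have hposall : ∀ s ∈ Set.Icc (0:ℝ) t, 0 < L (θ s) := by
    intro s hs
    exact lt_of_lt_of_le hpos (hanti hs.1 ht hs.2)
  -- F s = φ (L (θ s)) + μ s is antitone on [0, t]
  have hF : ∀ s ∈ Set.Icc (0:ℝ) t,
      HasDerivAt (fun r => φ (L (θ r)) + μ * r)
        (deriv φ (L (θ s)) * (-(‖gradient L (θ s)‖ ^ 2)) + μ) s := by
    intro s hs
    have hφd := (hφdiff (L (θ s)) (hposall s hs)).hasDerivAt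
    have hcomp := HasDerivAt.comp s hφd (hA s hs.1)
    have hlin : HasDerivAt (fun r : ℝ => μ * r) μ s := by
      simpa using (hasDerivAt_id s).const_mul μ
    exact hcomp.add hlin
  have hFanti : AntitoneOn (fun r => φ (L (θ r)) + μ * r) (Set.Icc 0 t) := by
    apply antitoneOn_of_deriv_nonpos (convex_Icc 0 t)
    · intro x hx
      exact ((hF x hx).continuousAt).continuousWithinAt
    · intro x hx
      have hx' := interior_subset hx
      exact ((hF x hx').differentiableAt).differentiableWithinAt
    · intro x hx
      have hx' := interior_subset hx
      rw [(hF x hx').deriv]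
      have := hKL (θ x) (hmem x hx'.1) (ne_of_gt (hposall x hx'))
      nlinarith
  have key : φ (L (θ t)) + μ * t ≤ φ (L (θ 0)) + μ * 0 :=
    hFanti (Set.left_mem_Icc.2 ht) (Set.right_mem_Icc.2 ht) ht
  have hle : φ (L (θ t)) ≤ φ u := by rw [hφu]; linarith
  exact (hφmono.le_iff_le hpos hu).1 hle
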